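/- Assume q₂ > 0 and c₂ = 0. Set p₁ = (d/(2q₂c₁))·(√((a+q₁)² + 4aq₂c₁/d) − (a+q₁)) and p₂ = (c₁/d)·p₁. Then (p₁, p₂, 0) is the unique zero of the vector field g(·,0) in [0,∞)³. -/

import Mathlib

open Set Real

/-- the unique nonnegative zero of `g(·,0)` when `q₂ > 0` and
`c₂ = 0`. -/
theorem stmt_10
    (a q₁ c₁ d c₁M dM q₂ q₃ c₂ c₃ c₂M c₃M : ℝ)
    (ha : 0 < a) (hq₁ : 0 < q₁) (hc₁ : 0 < c₁) (hd : 0 < d)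
    (hc₁M : 0 < c₁M) (hdM : 0 < dM)
    (hq₂ : 0 ≤ q₂) (hq₃ : 0 ≤ q₃) (hc₂ : 0 ≤ c₂) (hc₃ : 0 ≤ c₃)
    (hc₂M : 0 ≤ c₂M) (hc₃M : 0 ≤ c₃M)
    (g : ℝ × ℝ × ℝ → ℝ → ℝ × ℝ × ℝ)
    (hg : ∀ (x : ℝ × ℝ × ℝ) (i : ℝ), g x i =
      (a * (1 - x.1) - (q₁ + q₂ * x.2.1 + q₃ * x.2.2) * x.1,
       c₁ / (1 + c₂ * x.2.1 + c₃ * x.2.2) * x.1 - d * x.2.1,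
       c₁M / (1 + c₂M * x.2.1 + c₃M * x.2.2) * i - dM * x.2.2))
    (hq₂pos : 0 < q₂) (hc₂0 : c₂ = 0)
    (p₁ p₂ : ℝ)
    (hp₁ : p₁ = d / (2 * q₂ * c₁) *
      (Real.sqrt ((a + q₁) ^ 2 + 4 * a * q₂ * c₁ / d) - (a + q₁)))
    (hp₂ : p₂ = c₁ / d * p₁) :
    g (p₁, p₂, 0) 0 = 0 ∧
    ∀ y : ℝ × ℝ × ℝ, 0 ≤ y.1 → 0 ≤ y.2.1 → 0 ≤ y.2.2 → g y 0 = 0 →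
      y = (p₁, p₂, 0) := by
  subst hc₂0
  have hd' : d ≠ 0 := hd.ne'
  set s := Real.sqrt ((a + q₁) ^ 2 + 4 * a * q₂ * c₁ / d) with hs
  have harg : (0:ℝ) ≤ (a + q₁) ^ 2 + 4 * a * q₂ * c₁ / d := by positivity
  have hs2 : s ^ 2 = (a + q₁) ^ 2 + 4 * a * q₂ * c₁ / d := Real.sq_sqrt harg
  have hs0 : 0 ≤ s := Real.sqrt_nonneg _
  clear_value s
  have hsb : a + q₁ < s := by
    nlinarith [hs2, div_pos (by positivity : (0:ℝ) < 4 * a * q₂ * c₁) hd]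
  have hp₁pos : 0 < p₁ := by
    rw [hp₁]
    have h1 : 0 < d / (2 * q₂ * c₁) := by positivity
    have h2 : 0 < s - (a + q₁) := by linarith
    positivity
  -- p₁ satisfies the quadratic (cleared of denominators)
  have hquad : q₂ * c₁ * p₁ ^ 2 + (a + q₁) * d * p₁ - a * d = 0 := by
    rw [hp₁]
    have hs2' : s ^ 2 * d = (a + q₁) ^ 2 * d + 4 * a * q₂ * c₁ := by
      field_simp at hs2; linarith
    field_simp
    linear_combination d * hs2'
  constructor
  · rw [hg]
    have e1 : a * (1 - p₁) - (q₁ + q₂ * p₂ + q₃ * 0) * p₁ = 0 := by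
      rw [hp₂]
      field_simp
      linear_combination -hquad
    have e2 : c₁ / (1 + 0 * p₂ + c₃ * 0) * p₁ - d * p₂ = 0 := by
      rw [hp₂]
      field_simp
      ring
    have e3 : c₁M / (1 + c₂M * p₂ + c₃M * 0) * 0 - dM * 0 = 0 := by ring
    simp only [Prod.mk.injEq]
    exact Prod.ext e1 (Prod.ext e2 e3)
  · rintro ⟨y₁, y₂, y₃⟩ hy₁ hy₂ hy₃ hy
    simp only at hy₁ hy₂ hy₃
    rw [hg] at hy
    simp only [Prod.mk.injEq, Prod.ext_iff, Prod.fst_zero, Prod.snd_zero] at hy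
    obtain ⟨h1, h2, h3⟩ := hy
    have hy₃0 : y₃ = 0 := by
      have hz : dM * y₃ = 0 := by linarith [h3]
      rcases mul_eq_zero.mp hz with h | h
      · exact absurd h hdM.ne'
      · exact h
    subst hy₃0
    have h2' : c₁ * y₁ - d * y₂ = 0 := by
      have : (1 : ℝ) + 0 * y₂ + c₃ * 0 = 1 := by ring
      rw [this, div_one] at h2
      exact h2
    have hy₂eq : y₂ = c₁ / d * y₁ := by
      field_simp
      linarith [h2']
    have hquady : q₂ * c₁ * y₁ ^ 2 + (a + q₁) * d * y₁ - a * d = 0 := by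
      rw [hy₂eq] at h1
      field_simp at h1
      linear_combination -h1
    have hy₁eq : y₁ = p₁ := by
      have hfac : (y₁ - p₁) * (q₂ * c₁ * (y₁ + p₁) + (a + q₁) * d) = 0 := by
        linear_combination hquady - hquad
      have hpos : 0 < q₂ * c₁ * (y₁ + p₁) + (a + q₁) * d := by
        have h0 : 0 ≤ q₂ * c₁ * (y₁ + p₁) := by positivity
        have h1 : 0 < (a + q₁) * d := by positivity
        linarith
      rcases mul_eq_zero.mp hfac with h | h
      · linarith
      · linarith
    subst hy₁eq
    simp only [Prod.mk.injEq]
    exact ⟨trivial, by rw [hy₂eq, hp₂], trivial⟩
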